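/- Let x and y be nondecreasing income distributions of size n with equal means. If for every convex weighting function f in the class F one has W_f(x) ≥ W_f(y), then for every h = 1,…,n−1, ∑_{i=1}^{h} x_i ≥ ∑_{i=1}^{h} y_i. -/

import Mathlib

/-- Membership in the class F: `f : [0,1] → [0,1]` continuous, nondecreasing,
with `f 0 = 0` and `f 1 = 1`. -/
def MemF (f : ℝ → ℝ) : Prop :=
  ContinuousOn f (Set.Icc 0 1) ∧ MonotoneOn f (Set.Icc 0 1) ∧
  f 0 = 0 ∧ f 1 = 1 ∧ ∀ t ∈ Set.Icc (0 : ℝ) 1, f t ∈ Set.Icc (0 : ℝ) 1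

/-- Extended Gini social welfare. -/
noncomputable def W {n : ℕ} (f : ℝ → ℝ) (z : Fin n → ℝ) : ℝ :=
  ∑ i : Fin n, (f (((n : ℝ) - (i : ℕ)) / n) - f (((n : ℝ) - (i : ℕ) - 1) / n)) * z i

theorem stmt4 {n : ℕ} (hn : 2 ≤ n) (x y : Fin n → ℝ)
    (hx : Monotone x) (hy : Monotone y)
    (hmean : (∑ i : Fin n, x i) / n = (∑ i : Fin n, y i) / n)
    (hW : ∀ f : ℝ → ℝ, MemF f → ConvexOn ℝ (Set.Icc 0 1) f → W f x ≥ W f y) :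
    ∀ h : ℕ, 1 ≤ h → h ≤ n - 1 →
      ∑ i ∈ Finset.univ.filter (fun i : Fin n => (i : ℕ) < h), x i ≥
      ∑ i ∈ Finset.univ.filter (fun i : Fin n => (i : ℕ) < h), y i := by
  intro h h1 hle
  have hn0 : (0:ℝ) < n := by positivity
  have hh0 : (0:ℝ) < h := by exact_mod_cast h1
  have hhn : h < n := by omega
  have hhn' : (h:ℝ) ≤ n := by exact_mod_cast hhn.le
  set t0 : ℝ := ((n:ℝ) - h)/n with ht0
  set c : ℝ := (n:ℝ)/h with hc
  have hc0 : 0 < c := div_pos hn0 hh0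
  have ht00 : 0 ≤ t0 := div_nonneg (by linarith) hn0.le
  have ht01 : t0 ≤ 1 := by
    rw [ht0, div_le_one hn0]; linarith
  set f : ℝ → ℝ := fun t => max 0 ((t - t0) * c) with hf
  -- f at points ≥ t0 and ≤ t0
  have fup : ∀ a : ℝ, t0 ≤ a → f a = (a - t0) * c := by
    intro a ha
    exact max_eq_right (mul_nonneg (by linarith) hc0.le)
  have fdn : ∀ a : ℝ, a ≤ t0 → f a = 0 := by
    intro a ha
    exact max_eq_left (mul_nonpos_of_nonpos_of_nonneg (by linarith) hc0.le)
  -- key computation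
  have key : ∀ z : Fin n → ℝ,
      W f z = (1/(h:ℝ)) * ∑ i ∈ Finset.univ.filter (fun i : Fin n => (i : ℕ) < h), z i := by
    intro z
    have hpt : ∀ i : Fin n,
        (f (((n : ℝ) - (i : ℕ)) / n) - f (((n : ℝ) - (i : ℕ) - 1) / n)) * z i
          = if (i : ℕ) < h then (1/(h:ℝ)) * z i else 0 := by
      intro i
      by_cases hih : (i : ℕ) < h
      · have hi1 : ((i:ℕ):ℝ) + 1 ≤ h := by exact_mod_cast Nat.succ_le_of_lt hih
        have ha1 : t0 ≤ ((n : ℝ) - (i : ℕ) - 1) / n := by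
          rw [ht0]
          apply div_le_div_of_nonneg_right ?_ hn0.le |>.trans_eq rfl
          linarith
        have ha2 : t0 ≤ ((n : ℝ) - (i : ℕ)) / n := by
          apply ha1.trans
          apply div_le_div_of_nonneg_right (by linarith) hn0.le
        rw [fup _ ha1, fup _ ha2, if_pos hih]
        have : (((n : ℝ) - (i : ℕ)) / n - t0) * c - (((n : ℝ) - (i : ℕ) - 1) / n - t0) * c
            = 1/(h:ℝ) := by
          rw [hc]
          field_simp
          ring
        rw [← this]
      · have hhi : (h:ℝ) ≤ (i:ℕ) := by exact_mod_cast Nat.le_of_not_lt hih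
        have ha2 : ((n : ℝ) - (i : ℕ)) / n ≤ t0 := by
          rw [ht0]
          apply div_le_div_of_nonneg_right (by linarith) hn0.le
        have ha1 : ((n : ℝ) - (i : ℕ) - 1) / n ≤ t0 := by
          refine le_trans ?_ ha2
          apply div_le_div_of_nonneg_right (by linarith) hn0.le
        rw [fdn _ ha1, fdn _ ha2, if_neg hih]
        ring
    rw [W]
    calc ∑ i : Fin n, (f (((n : ℝ) - (i : ℕ)) / n) - f (((n : ℝ) - (i : ℕ) - 1) / n)) * z i
        = ∑ i : Fin n, (if (i : ℕ) < h then (1/(h:ℝ)) * z i else 0) :=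
          Finset.sum_congr rfl (fun i _ => hpt i)
      _ = ∑ i ∈ Finset.univ.filter (fun i : Fin n => (i : ℕ) < h), (1/(h:ℝ)) * z i :=
          (Finset.sum_filter _ _).symm
      _ = (1/(h:ℝ)) * ∑ i ∈ Finset.univ.filter (fun i : Fin n => (i : ℕ) < h), z i :=
          (Finset.mul_sum _ _ _).symm
  -- f ∈ F
  have hmemF : MemF f := by
    refine ⟨?_, ?_, ?_, ?_, ?_⟩
    · exact (continuous_const.max ((continuous_id.sub continuous_const).mul
        continuous_const)).continuousOn
    · intro a _ b _ hab
      exact max_le_max le_rfl (mul_le_mul_of_nonneg_right (by linarith) hc0.le)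
    · exact fdn 0 ht00
    · rw [fup 1 ht01, ht0, hc]
      field_simp
      ring
    · intro t ht
      refine ⟨le_max_left _ _, max_le (by norm_num) ?_⟩
      have h1c : (1 - t0) * c = 1 := by rw [ht0, hc]; field_simp; ring
      calc (t - t0) * c ≤ (1 - t0) * c :=
            mul_le_mul_of_nonneg_right (by linarith [ht.2]) hc0.le
        _ = 1 := h1c
  -- f convex
  have hconv : ConvexOn ℝ (Set.Icc (0:ℝ) 1) f := by
    have haff : ConvexOn ℝ (Set.Icc (0:ℝ) 1) (fun t => (t - t0) * c) := by
      have h1 := ((convexOn_id (convex_Icc (0:ℝ) 1)).sub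
        (concaveOn_const t0 (convex_Icc (0:ℝ) 1))).smul hc0.le
      simpa [smul_eq_mul, mul_comm] using h1
    have hconst : ConvexOn ℝ (Set.Icc (0:ℝ) 1) (fun _ : ℝ => (0:ℝ)) :=
      convexOn_const 0 (convex_Icc 0 1)
    simpa [Pi.sup_def, hf] using hconst.sup haff
  have := hW f hmemF hconv
  rw [key x, key y] at this
  have hpos : (0:ℝ) < 1/(h:ℝ) := by positivity
  exact le_of_mul_le_mul_left this hpos
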